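/- arXiv:math/0505424 — 5 statements merged into one kernel-verified Lean document; each statement's English description precedes it below -/
import Mathlib

section
/- Let P'(z) = ∏_{j=1}^{n−1}(z−ζ_j) and P(z) = ∫_β^z P'(w) dw, and suppose z_i is a simple root of P. Then, viewing z_i as an implicit function of the critical point ζ_j (with the other ζ_k and β fixed), one has ∂z_i/∂ζ_j = (1/P'(z_i)) ∫_β^{z_i} P'(w)/(w−ζ_j) dw. -/
open Polynomial

private lemma analyticAt_eval (p : Polynomial ℂ) (x : ℂ) :
    AnalyticAt ℂ (fun w => p.eval w) x := by
  have := (analyticAt_id (𝕜 := ℂ) (z := x) (E := ℂ)).aeval_polynomial p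
  simpa [Polynomial.coe_aeval_eq_eval] using this

/-- Let `P'(z) = (z - ζ_j) Q(z)` with `Q = ∏_{k≠j}(z - ζ_k)`, and for each
value `s` of `ζ_j` let `P s` be the antiderivative of `(z-s)Q(z)` vanishing
at `β`. If `z_i` is a simple root of `P ζ₀`, then locally `z_i` is an
analytic function of `ζ_j`, and `∂z_i/∂ζ_j = (1/P'(z_i)) ∫_β^{z_i} P'(w)/(w-ζ_j) dw`,
where the integral equals `R(z_i)` for `R` the antiderivative of `Q` vanishing at `β`. -/
theorem stmt7 (Q : Polynomial ℂ) (β ζ₀ zi : ℂ) (P : ℂ → Polynomial ℂ)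
    (hPd : ∀ s : ℂ, Polynomial.derivative (P s) = (Polynomial.X - Polynomial.C s) * Q)
    (hPβ : ∀ s : ℂ, (P s).eval β = 0)
    (hroot : (P ζ₀).eval zi = 0)
    (hsimple : (zi - ζ₀) * Q.eval zi ≠ 0)
    (R : Polynomial ℂ) (hRd : Polynomial.derivative R = Q) (hRβ : R.eval β = 0) :
    ∃ z : ℂ → ℂ, AnalyticAt ℂ z ζ₀ ∧ z ζ₀ = zi ∧
      (∀ᶠ s in nhds ζ₀, (P s).eval (z s) = 0) ∧
      deriv z ζ₀ = (1 / ((zi - ζ₀) * Q.eval zi)) * R.eval zi := by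
  -- Key structural identity: P s = P ζ₀ - C (s - ζ₀) * R
  have key : ∀ s : ℂ, P s = P ζ₀ - Polynomial.C (s - ζ₀) * R := by
    intro s
    have hder : Polynomial.derivative (P s - (P ζ₀ - Polynomial.C (s - ζ₀) * R)) = 0 := by
      simp only [derivative_sub, derivative_mul, derivative_C, hPd, hRd, map_sub]
      ring
    have hC := Polynomial.eq_C_of_derivative_eq_zero hder
    have hcoe : (P s - (P ζ₀ - Polynomial.C (s - ζ₀) * R)).coeff 0 = 0 := by
      have hβ : (P s - (P ζ₀ - Polynomial.C (s - ζ₀) * R)).eval β = 0 := by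
        simp [hPβ, hRβ]
      rw [hC] at hβ
      simpa using hβ
    rw [hcoe, map_zero] at hC
    exact sub_eq_zero.mp hC
  by_cases hRzi : R.eval zi = 0
  · -- Degenerate case: zi is a root of P s for every s; take the constant function.
    refine ⟨fun _ => zi, analyticAt_const, rfl, ?_, ?_⟩
    · filter_upwards with s
      rw [key s]
      simp [hroot, hRzi]
    · simp [hRzi]
  · -- Main case: invert φ z = ζ₀ + (P ζ₀).eval z / R.eval z.
    set φ : ℂ → ℂ := fun z => ζ₀ + (P ζ₀).eval z / R.eval z with hφdef
    have hφzi : φ zi = ζ₀ := by simp [hφdef, hroot]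
    set c : ℂ := ((zi - ζ₀) * Q.eval zi) / R.eval zi with hc
    have hcne : c ≠ 0 := div_ne_zero hsimple hRzi
    -- strict derivative of φ at zi
    have hg : HasStrictDerivAt (fun z => (P ζ₀).eval z) ((zi - ζ₀) * Q.eval zi) zi := by
      have := Polynomial.hasStrictDerivAt (P ζ₀) zi
      rwa [hPd ζ₀, eval_mul, eval_sub, eval_X, eval_C] at this
    have hR : HasStrictDerivAt (fun z => R.eval z) (Q.eval zi) zi := by
      have := Polynomial.hasStrictDerivAt R zi
      rwa [hRd] at this
    have hφ : HasStrictDerivAt φ c zi := by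
      have hdiv := hg.div hR hRzi
      have : ((zi - ζ₀) * Q.eval zi * R.eval zi - (P ζ₀).eval zi * Q.eval zi)
          / (R.eval zi) ^ 2 = c := by
        rw [hroot, hc]
        field_simp
        ring
      rw [this] at hdiv
      simpa [hφdef] using hdiv.const_add ζ₀
    set z : ℂ → ℂ := hφ.localInverse φ c zi hcne with hz
    have hzζ : z ζ₀ = zi := by
      have := (hφ.hasStrictFDerivAt_equiv hcne).localInverse_apply_image (f := φ)
      rwa [hφzi] at this
    refine ⟨z, ?_, hzζ, ?_, ?_⟩
    · -- analyticity via analytic inverse function theorem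
      have hF : HasStrictFDerivAt φ (ContinuousLinearEquiv.unitsEquivAut ℂ (Units.mk0 c hcne) : ℂ →L[ℂ] ℂ) zi :=
        hφ.hasStrictFDerivAt_equiv hcne
      have hsrc : zi ∈ (hF.toOpenPartialHomeomorph φ).source := hF.mem_toOpenPartialHomeomorph_source
      have hφa : AnalyticAt ℂ φ zi := by
        apply analyticAt_const.add
        exact (analyticAt_eval (P ζ₀) zi).div (analyticAt_eval R zi) hRzi
      have hfd : fderiv ℂ (hF.toOpenPartialHomeomorph φ) zi
          = (ContinuousLinearEquiv.unitsEquivAut ℂ (Units.mk0 c hcne) : ℂ →L[ℂ] ℂ) := by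
        rw [hF.toOpenPartialHomeomorph_coe]
        exact hF.hasFDerivAt.fderiv
      have hsymm := (hF.toOpenPartialHomeomorph φ).analyticAt_symm' hsrc
        (by rw [hF.toOpenPartialHomeomorph_coe]; exact hφa) hfd
      have : (hF.toOpenPartialHomeomorph φ) zi = ζ₀ := by
        rw [hF.toOpenPartialHomeomorph_coe]; exact hφzi
      rw [this] at hsymm
      exact hsymm
    · -- eventual root property
      have h1 : ∀ᶠ s in nhds ζ₀, φ (z s) = s := by
        have := (hφ.hasStrictFDerivAt_equiv hcne).eventually_right_inverse (f := φ)
        rwa [hφzi] at this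
      have h2 : ∀ᶠ s in nhds ζ₀, R.eval (z s) ≠ 0 := by
        have hc : ContinuousAt z ζ₀ := by
          have := (hφ.hasStrictFDerivAt_equiv hcne).localInverse_continuousAt (f := φ)
          rwa [hφzi] at this
        have hcont : ContinuousAt (fun s => R.eval (z s)) ζ₀ :=
          (R.continuous.continuousAt).comp hc
        apply hcont.eventually_ne
        show R.eval (z ζ₀) ≠ 0
        rw [hzζ]; exact hRzi
      filter_upwards [h1, h2] with s h1s h2s
      rw [key s]
      have : (P ζ₀).eval (z s) = (s - ζ₀) * R.eval (z s) := by
        have := h1s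
        rw [hφdef] at this
        field_simp at this
        linear_combination this
      simp only [eval_sub, eval_mul, eval_C, this]
      ring
    · -- derivative computation
      have hd : HasStrictDerivAt z c⁻¹ (φ zi) := hφ.to_localInverse hcne
      rw [hφzi] at hd
      rw [hd.hasDerivAt.deriv, hc]
      field_simp
end

section
/- Let P'(z) = ∏_{j=1}^{n−1}(z−ζ_j) and P(z) = ∫_β^z P'(w) dw, with z_i a simple root of P. Then the second partial derivative of the implicit root z_i with respect to ζ_j satisfies ∂²z_i/∂ζ_j² = (2/(z_i−ζ_j)) ∂z_i/∂ζ_j − (P''(z_i)/P'(z_i)) (∂z_i/∂ζ_j)², provided z_i ≠ ζ_j. -/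
open Polynomial

/-- Every complex polynomial has an antiderivative. -/
lemma exists_antideriv (q : Polynomial ℂ) : ∃ S : Polynomial ℂ, Polynomial.derivative S = q := by
  refine ⟨q.sum fun n a => C (a / (n + 1)) * X ^ (n + 1), ?_⟩
  rw [Polynomial.sum, map_sum]
  conv_rhs => rw [← Polynomial.sum_C_mul_X_pow_eq q, Polynomial.sum]
  refine Finset.sum_congr rfl fun n _ => ?_
  rw [Polynomial.derivative_C_mul, Polynomial.derivative_X_pow]
  simp only [Nat.add_sub_cancel, Nat.cast_add, Nat.cast_one]
  rw [← mul_assoc, ← Polynomial.C_mul]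
  congr 2
  have hn : (n : ℂ) + 1 ≠ 0 := Nat.cast_add_one_ne_zero n
  field_simp

/-- With `P'(z) = (z - ζ_j) Q(z)` and `P s` the antiderivative of `(z-s)Q(z)`
vanishing at `β`, let `z` be the analytic implicit root function near `ζ₀`
with `z ζ₀ = z_i` a simple root, `z_i ≠ ζ₀`. Then
`∂²z_i/∂ζ_j² = (2/(z_i-ζ₀)) ∂z_i/∂ζ_j - (P''(z_i)/P'(z_i)) (∂z_i/∂ζ_j)²`,
where `P'' = Q + (X - ζ₀) Q'`. -/
theorem stmt8 (Q : Polynomial ℂ) (β ζ₀ zi : ℂ) (P : ℂ → Polynomial ℂ)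
    (hPd : ∀ s : ℂ, Polynomial.derivative (P s) = (Polynomial.X - Polynomial.C s) * Q)
    (hPβ : ∀ s : ℂ, (P s).eval β = 0)
    (z : ℂ → ℂ) (hz : AnalyticAt ℂ z ζ₀) (hz0 : z ζ₀ = zi)
    (hroot : ∀ᶠ s in nhds ζ₀, (P s).eval (z s) = 0)
    (hsimple : (zi - ζ₀) * Q.eval zi ≠ 0)
    (hne : zi ≠ ζ₀) :
    deriv (deriv z) ζ₀ =
      (2 / (zi - ζ₀)) * deriv z ζ₀ -
      ((Q + (Polynomial.X - Polynomial.C ζ₀) * Polynomial.derivative Q).eval zi /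
        ((zi - ζ₀) * Q.eval zi)) * (deriv z ζ₀) ^ 2 := by
  -- get a normalized antiderivative S of Q with S.eval β = 0
  obtain ⟨S₀, hS₀⟩ := exists_antideriv Q
  set S : Polynomial ℂ := S₀ - C (S₀.eval β) with hSdef
  have hS : Polynomial.derivative S = Q := by simp [hSdef, hS₀]
  have hSβ : S.eval β = 0 := by simp [hSdef]
  -- Relate P s to P ζ₀
  have hPrep : ∀ s : ℂ, P s = P ζ₀ + C (ζ₀ - s) * S := by
    intro s
    have hd : Polynomial.derivative (P s - P ζ₀ - C (ζ₀ - s) * S) = 0 := by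
      simp only [map_sub, Polynomial.derivative_mul, Polynomial.derivative_C, hPd, hS]
      ring
    have hC := Polynomial.eq_C_of_derivative_eq_zero hd
    have hev : (P s - P ζ₀ - C (ζ₀ - s) * S).eval β = 0 := by
      simp [hPβ, hSβ]
    have h0 : P s - P ζ₀ - C (ζ₀ - s) * S = 0 := by
      rw [hC] at hev
      simp only [Polynomial.eval_C] at hev
      rw [hC, hev, map_zero]
    linear_combination h0
  -- analyticity facts
  have hev : ∀ᶠ s in nhds ζ₀, AnalyticAt ℂ z s := hz.eventually_analyticAt
  obtain ⟨U, hUz, hUan⟩ := hev.exists_mem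
  have hAn : AnalyticOnNhd ℂ z U := fun x hx => hUan x hx
  have hdzAn : AnalyticAt ℂ (deriv z) ζ₀ := hAn.deriv ζ₀ (mem_of_mem_nhds hUz)
  -- first differentiation: eventual equation
  set v : ℂ := deriv z ζ₀ with hv
  set w : ℂ := deriv (deriv z) ζ₀ with hw
  have hg : (fun s => (P ζ₀).eval (z s) + (ζ₀ - s) * S.eval (z s)) =ᶠ[nhds ζ₀]
      (fun _ => (0 : ℂ)) := by
    filter_upwards [hroot] with s hs
    rw [hPrep s] at hs
    simpa using hs
  have hgd := hg.deriv
  have h1 : ∀ᶠ s in nhds ζ₀,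
      (z s - s) * Q.eval (z s) * deriv z s - S.eval (z s) = 0 := by
    filter_upwards [hgd, hev] with s hds has
    have hzd : HasDerivAt z (deriv z s) s := has.differentiableAt.hasDerivAt
    have hA : HasDerivAt (fun t => (P ζ₀).eval (z t))
        ((Polynomial.derivative (P ζ₀)).eval (z s) * deriv z s) s :=
      ((P ζ₀).hasDerivAt (z s)).comp s hzd
    have hB : HasDerivAt (fun t => S.eval (z t)) (Q.eval (z s) * deriv z s) s := by
      have := (S.hasDerivAt (z s)).comp s hzd
      rwa [hS] at this
    have hC : HasDerivAt (fun t : ℂ => ζ₀ - t) (-1) s := by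
      simpa using (hasDerivAt_id s).const_sub ζ₀
    have hD : HasDerivAt (fun t => (ζ₀ - t) * S.eval (z t))
        ((-1) * S.eval (z s) + (ζ₀ - s) * (Q.eval (z s) * deriv z s)) s := hC.mul hB
    have hG : HasDerivAt (fun t => (P ζ₀).eval (z t) + (ζ₀ - t) * S.eval (z t)) _ s :=
      hA.add hD
    have hderiv := hG.deriv
    rw [hds] at hderiv
    simp only [deriv_const] at hderiv
    have hP' : (Polynomial.derivative (P ζ₀)).eval (z s) = (z s - ζ₀) * Q.eval (z s) := by
      rw [hPd]; simp
    rw [hP'] at hderiv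
    linear_combination -hderiv
  -- second differentiation at ζ₀
  have hzd : HasDerivAt z v ζ₀ := hz.differentiableAt.hasDerivAt
  have hdzd : HasDerivAt (deriv z) w ζ₀ := hdzAn.differentiableAt.hasDerivAt
  have hA : HasDerivAt (fun t => z t - t) (v - 1) ζ₀ := hzd.sub (hasDerivAt_id ζ₀)
  have hB : HasDerivAt (fun t => Q.eval (z t))
      ((Polynomial.derivative Q).eval zi * v) ζ₀ := by
    have := (Q.hasDerivAt (z ζ₀)).comp ζ₀ hzd
    rwa [hz0] at this
  have hC : HasDerivAt (fun t => S.eval (z t)) (Q.eval zi * v) ζ₀ := by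
    have := (S.hasDerivAt (z ζ₀)).comp ζ₀ hzd
    rwa [hS, hz0] at this
  have hD : HasDerivAt (fun t => (z t - t) * Q.eval (z t))
      ((v - 1) * Q.eval zi + (zi - ζ₀) * ((Polynomial.derivative Q).eval zi * v)) ζ₀ := by
    have := hA.mul hB
    rwa [hz0] at this
  have hE : HasDerivAt (fun t => (z t - t) * Q.eval (z t) * deriv z t)
      (((v - 1) * Q.eval zi + (zi - ζ₀) * ((Polynomial.derivative Q).eval zi * v)) * v +
        (zi - ζ₀) * Q.eval zi * w) ζ₀ := by
    have := hD.mul hdzd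
    rwa [hz0, ← hv] at this
  have hF : HasDerivAt (fun t => (z t - t) * Q.eval (z t) * deriv z t - S.eval (z t))
      ((((v - 1) * Q.eval zi + (zi - ζ₀) * ((Polynomial.derivative Q).eval zi * v)) * v +
        (zi - ζ₀) * Q.eval zi * w) - Q.eval zi * v) ζ₀ := hE.sub hC
  have h1eq : (fun s => (z s - s) * Q.eval (z s) * deriv z s - S.eval (z s)) =ᶠ[nhds ζ₀]
      (fun _ => (0 : ℂ)) := h1
  have hderiv2 := hF.deriv
  rw [h1eq.deriv_eq] at hderiv2
  simp only [deriv_const] at hderiv2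
  -- final algebra
  have hzq : zi - ζ₀ ≠ 0 := sub_ne_zero.mpr hne
  have hq : Q.eval zi ≠ 0 := fun h => hsimple (by rw [h, mul_zero])
  have hE2 : w = (2 * Q.eval zi * v -
      (Q.eval zi + (zi - ζ₀) * (Polynomial.derivative Q).eval zi) * v ^ 2) /
      ((zi - ζ₀) * Q.eval zi) := by
    rw [eq_div_iff hsimple]
    linear_combination -hderiv2
  simp only [Polynomial.eval_add, Polynomial.eval_mul, Polynomial.eval_sub,
    Polynomial.eval_X, Polynomial.eval_C]
  rw [hE2]
  field_simp
end

section
/- Let P'(z) = ∏_{j=1}^{n−1}(z−ζ_j) and P(z) = ∫_β^z P'(w) dw, with z_i a simple root of P, and let j ≠ k with z_i ∉ {ζ_j, ζ_k}. Then the mixed second partial derivative of the implicit root satisfies ∂²z_i/∂ζ_j∂ζ_k = (1/(z_i−ζ_k)) ∂z_i/∂ζ_j + (1/(z_i−ζ_j)) ∂z_i/∂ζ_k − (P''(z_i)/P'(z_i)) (∂z_i/∂ζ_j)(∂z_i/∂ζ_k) − (1/P'(z_i)) ∫_β^{z_i} P'(w)/((w−ζ_j)(w−ζ_k)) dw. 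-/
open Polynomial Filter

theorem final_alg (a q r bB q' uj uk zi : ℂ) (h1 : uj ≠ 0) (h2 : uk ≠ 0) (h3 : q ≠ 0) :
    ((zi * q * a - (r + (zi - uj) * (q * a))) * (uj * uk * q) -
        (bB - (zi - uj) * r) *
          (((a - 1) * uk + uj * a) * q + uj * uk * (q' * a))) /
      (uj * uk * q) ^ 2 =
    1 / uk * a + 1 / uj * ((bB - (zi - uj) * r) / (uj * uk * q)) -
      ((uk + uj) * q + uj * uk * q') / (uj * uk * q) *
        (a * ((bB - (zi - uj) * r) / (uj * uk * q))) -
      1 / (uj * uk * q) * r := by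
  have hd : uj * uk * q ≠ 0 := mul_ne_zero (mul_ne_zero h1 h2) h3
  have hd2 : (uj * uk * q) ^ 2 ≠ 0 := pow_ne_zero 2 hd
  have e1 : 1 / uk * a = a * (uj ^ 2 * uk * q ^ 2) / (uj * uk * q) ^ 2 := by
    rw [eq_div_iff hd2]; field_simp
  have e2 : 1 / uj * ((bB - (zi - uj) * r) / (uj * uk * q))
      = (bB - (zi - uj) * r) * (uk * q) / (uj * uk * q) ^ 2 := by
    rw [eq_div_iff hd2]; field_simp
  have e3 : ((uk + uj) * q + uj * uk * q') / (uj * uk * q) *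
        (a * ((bB - (zi - uj) * r) / (uj * uk * q)))
      = ((uk + uj) * q + uj * uk * q') * (a * (bB - (zi - uj) * r)) / (uj * uk * q) ^ 2 := by
    rw [← mul_div_assoc, div_mul_div_comm, ← pow_two, mul_assoc]
  have e4 : 1 / (uj * uk * q) * r = r * (uj * uk * q) / (uj * uk * q) ^ 2 := by
    rw [eq_div_iff hd2]; field_simp
  rw [e1, e2, e3, e4, ← add_div, ← sub_div, ← sub_div]
  rw [div_eq_div_iff hd2 hd2]
  ring

theorem Pdecomp (Q : Polynomial ℂ) (β : ℂ) (P : ℂ → ℂ → Polynomial ℂ)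
    (hPd : ∀ s t : ℂ, Polynomial.derivative (P s t) =
      (Polynomial.X - Polynomial.C s) * (Polynomial.X - Polynomial.C t) * Q)
    (hPβ : ∀ s t : ℂ, (P s t).eval β = 0)
    (R : Polynomial ℂ) (hRd : Polynomial.derivative R = Q) (hRβ : R.eval β = 0)
    (s t : ℂ) :
    P s t = P 0 0 - (C s + C t) * (P 0 0 - P 1 0) + C s * C t * R := by
  have h : derivative (P s t - (P 0 0 - (C s + C t) * (P 0 0 - P 1 0) + C s * C t * R)) = 0 := by
    simp only [derivative_sub, derivative_add, derivative_mul, derivative_C, hPd, hRd, C_0, C_1]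
    ring
  obtain ⟨c, hc⟩ : ∃ c, P s t - (P 0 0 - (C s + C t) * (P 0 0 - P 1 0) + C s * C t * R) = C c :=
    ⟨_, Polynomial.eq_C_of_derivative_eq_zero h⟩
  have h2 := congrArg (Polynomial.eval β) hc
  simp [hPβ, hRβ] at h2
  have h0 : P s t - (P 0 0 - (C s + C t) * (P 0 0 - P 1 0) + C s * C t * R) = 0 := by
    rw [hc, ← h2]; simp
  linear_combination (norm := ring_nf) h0

set_option maxHeartbeats 1000000 in
/-- With `P'(z) = (z - ζ_j)(z - ζ_k) Q(z)` and `P s t` the antiderivative of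
`(z-s)(z-t)Q(z)` vanishing at `β`, let `z` be the analytic implicit root
function of `(ζ_j, ζ_k)` near `(ζj₀, ζk₀)` with value the simple root `z_i`,
`z_i ∉ {ζj₀, ζk₀}`. Then the mixed second partial satisfies
`∂²z_i/∂ζ_j∂ζ_k = (1/(z_i-ζ_k)) ∂z_i/∂ζ_j + (1/(z_i-ζ_j)) ∂z_i/∂ζ_k
 - (P''(z_i)/P'(z_i)) (∂z_i/∂ζ_j)(∂z_i/∂ζ_k) - (1/P'(z_i)) ∫_β^{z_i} P'(w)/((w-ζ_j)(w-ζ_k)) dw`,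
where the integral equals `R(z_i)` for `R` the antiderivative of `Q` vanishing at `β`. -/
theorem stmt9 (Q : Polynomial ℂ) (β ζj ζk zi : ℂ) (hjk : ζj ≠ ζk)
    (P : ℂ → ℂ → Polynomial ℂ)
    (hPd : ∀ s t : ℂ, Polynomial.derivative (P s t) =
      (Polynomial.X - Polynomial.C s) * (Polynomial.X - Polynomial.C t) * Q)
    (hPβ : ∀ s t : ℂ, (P s t).eval β = 0)
    (z : ℂ → ℂ → ℂ)
    (hz : AnalyticAt ℂ (fun p : ℂ × ℂ => z p.1 p.2) (ζj, ζk))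
    (hz0 : z ζj ζk = zi)
    (hroot : ∀ᶠ p : ℂ × ℂ in nhds (ζj, ζk), (P p.1 p.2).eval (z p.1 p.2) = 0)
    (hsimple : (zi - ζj) * (zi - ζk) * Q.eval zi ≠ 0)
    (R : Polynomial ℂ) (hRd : Polynomial.derivative R = Q) (hRβ : R.eval β = 0) :
    deriv (fun s => deriv (fun t => z s t) ζk) ζj =
      (1 / (zi - ζk)) * deriv (fun s => z s ζk) ζj +
      (1 / (zi - ζj)) * deriv (fun t => z ζj t) ζk -
      ((Polynomial.derivative ((Polynomial.X - Polynomial.C ζj) *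
          (Polynomial.X - Polynomial.C ζk) * Q)).eval zi /
        ((zi - ζj) * (zi - ζk) * Q.eval zi)) *
        (deriv (fun s => z s ζk) ζj * deriv (fun t => z ζj t) ζk) -
      (1 / ((zi - ζj) * (zi - ζk) * Q.eval zi)) * R.eval zi := by
  set K : Polynomial ℂ := P 0 0 with hKdef
  set B : Polynomial ℂ := P 0 0 - P 1 0 with hBdef
  -- derivative facts
  have hK' : derivative K = X * X * Q := by
    rw [hKdef, hPd 0 0]; simp
  have hB' : derivative B = X * Q := by
    rw [hBdef, derivative_sub, hPd 0 0, hPd 1 0]; simp; ring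
  -- eval identity
  have hPeval : ∀ s t x : ℂ, (P s t).eval x
      = K.eval x - (s + t) * B.eval x + s * t * R.eval x := by
    intro s t x
    rw [Pdecomp Q β P hPd hPβ R hRd hRβ s t]
    simp [hKdef, hBdef]
  -- combined eventual statement
  have hcont : ContinuousAt (fun p : ℂ × ℂ =>
      (z p.1 p.2 - p.1) * (z p.1 p.2 - p.2) * Q.eval (z p.1 p.2)) (ζj, ζk) := by
    exact ((hz.continuousAt.sub continuousAt_fst).mul
      (hz.continuousAt.sub continuousAt_snd)).mul
      ((Q.continuous_aeval.continuousAt).comp hz.continuousAt)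
  have hne0 : ∀ᶠ p : ℂ × ℂ in nhds (ζj, ζk),
      (z p.1 p.2 - p.1) * (z p.1 p.2 - p.2) * Q.eval (z p.1 p.2) ≠ 0 := by
    apply hcont.eventually_ne
    simpa [hz0] using hsimple
  have hE : ∀ᶠ p : ℂ × ℂ in nhds (ζj, ζk),
      AnalyticAt ℂ (fun q : ℂ × ℂ => z q.1 q.2) p ∧
      (P p.1 p.2).eval (z p.1 p.2) = 0 ∧
      (z p.1 p.2 - p.1) * (z p.1 p.2 - p.2) * Q.eval (z p.1 p.2) ≠ 0 :=
    (hz.eventually_analyticAt).and (hroot.and hne0)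
  rw [nhds_prod_eq] at hE
  have hcur := hE.curry
  -- step C : formula for the inner derivative, eventually in s
  have hC : ∀ᶠ s in nhds ζj, deriv (fun t => z s t) ζk =
      (B.eval (z s ζk) - s * R.eval (z s ζk)) /
        ((z s ζk - s) * (z s ζk - ζk) * Q.eval (z s ζk)) := by
    filter_upwards [hcur] with s hs
    have hk := hs.self_of_nhds
    set u : ℂ := z s ζk with hu
    -- differentiability in t
    have hslice : AnalyticAt ℂ (fun t => z s t) ζk := by
      have : AnalyticAt ℂ (fun t : ℂ => (s, t)) ζk := analyticAt_const.prod analyticAt_id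
      exact hk.1.comp this
    set c : ℂ := deriv (fun t => z s t) ζk with hc
    have hcd : HasDerivAt (fun t => z s t) c ζk := hslice.differentiableAt.hasDerivAt
    -- the eventually-zero function
    have hg0 : (fun t => K.eval (z s t) - (s + t) * B.eval (z s t) + s * t * R.eval (z s t))
        =ᶠ[nhds ζk] (fun _ => (0:ℂ)) := by
      filter_upwards [hs] with t ht
      rw [← hPeval]; exact ht.2.1
    have h1 : HasDerivAt (fun t => K.eval (z s t)) ((derivative K).eval u * c) ζk :=
      (Polynomial.hasDerivAt K u).comp ζk hcd
    have h2 : HasDerivAt (fun t => B.eval (z s t)) ((derivative B).eval u * c) ζk :=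
      (Polynomial.hasDerivAt B u).comp ζk hcd
    have h3 : HasDerivAt (fun t => R.eval (z s t)) ((derivative R).eval u * c) ζk :=
      (Polynomial.hasDerivAt R u).comp ζk hcd
    have h4 : HasDerivAt (fun t : ℂ => s + t) 1 ζk := by
      simpa using (hasDerivAt_id ζk).const_add s
    have h5 : HasDerivAt (fun t : ℂ => s * t) s ζk := by
      simpa using (hasDerivAt_id ζk).const_mul s
    have hg : HasDerivAt (fun t => K.eval (z s t) - (s + t) * B.eval (z s t)
        + s * t * R.eval (z s t))
        ((derivative K).eval u * c - (1 * B.eval u + (s + ζk) * ((derivative B).eval u * c))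
          + (s * R.eval u + s * ζk * ((derivative R).eval u * c))) ζk :=
      (h1.sub (h4.mul h2)).add (h5.mul h3)
    have hEzero : (derivative K).eval u * c
        - (1 * B.eval u + (s + ζk) * ((derivative B).eval u * c))
        + (s * R.eval u + s * ζk * ((derivative R).eval u * c)) = 0 := by
      rw [← hg.deriv, hg0.deriv_eq]; simp
    rw [hK', hB', hRd] at hEzero
    simp only [eval_mul, eval_X] at hEzero
    rw [eq_div_iff hk.2.2]
    linear_combination hEzero
  -- outer derivative
  have hAs : AnalyticAt ℂ (fun s => z s ζk) ζj := by
    have : AnalyticAt ℂ (fun s : ℂ => (s, ζk)) ζj := analyticAt_id.prod analyticAt_const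
    exact AnalyticAt.comp (f := fun s : ℂ => (s, ζk)) hz this
  set a : ℂ := deriv (fun s => z s ζk) ζj with ha
  have had : HasDerivAt (fun s => z s ζk) a ζj := hAs.differentiableAt.hasDerivAt
  have hadn : HasDerivAt (fun s : ℂ => B.eval (z s ζk) - s * R.eval (z s ζk))
      ((derivative B).eval (z ζj ζk) * a
        - (1 * R.eval (z ζj ζk) + ζj * ((derivative R).eval (z ζj ζk) * a))) ζj :=
    (((Polynomial.hasDerivAt B _).comp ζj had :
        HasDerivAt (fun s => B.eval (z s ζk)) ((derivative B).eval (z ζj ζk) * a) ζj)).sub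
      ((hasDerivAt_id ζj).mul (((Polynomial.hasDerivAt R _).comp ζj had :
        HasDerivAt (fun s => R.eval (z s ζk)) ((derivative R).eval (z ζj ζk) * a) ζj)))
  have hadd : HasDerivAt (fun s : ℂ => (z s ζk - s) * (z s ζk - ζk) * Q.eval (z s ζk))
      (((a - 1) * (z ζj ζk - ζk) + (z ζj ζk - ζj) * a) * Q.eval (z ζj ζk)
        + (z ζj ζk - ζj) * (z ζj ζk - ζk) * ((derivative Q).eval (z ζj ζk) * a)) ζj :=
    ((had.sub (hasDerivAt_id ζj)).mul (had.sub_const ζk)).mul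
      (((Polynomial.hasDerivAt Q _).comp ζj had :
        HasDerivAt (fun s => Q.eval (z s ζk)) ((derivative Q).eval (z ζj ζk) * a) ζj))
  have hdne : (z ζj ζk - ζj) * (z ζj ζk - ζk) * Q.eval (z ζj ζk) ≠ 0 := by
    rw [hz0]; exact hsimple
  have hdiv := (hadn.div hadd hdne).deriv
  simp only [Pi.div_def] at hdiv
  have hLHS : deriv (fun s => deriv (fun t => z s t) ζk) ζj =
      deriv (fun s => (B.eval (z s ζk) - s * R.eval (z s ζk)) /
        ((z s ζk - s) * (z s ζk - ζk) * Q.eval (z s ζk))) ζj :=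
    Filter.EventuallyEq.deriv_eq hC
  have hb : deriv (fun t => z ζj t) ζk =
      (B.eval (z ζj ζk) - ζj * R.eval (z ζj ζk)) /
        ((z ζj ζk - ζj) * (z ζj ζk - ζk) * Q.eval (z ζj ζk)) := hC.self_of_nhds
  rw [hLHS, hdiv, hb]
  rw [hz0]
  -- nonvanishing facts
  have hq1 : zi - ζj ≠ 0 := by intro h; apply hsimple; rw [h]; ring
  have hq2 : zi - ζk ≠ 0 := by intro h; apply hsimple; rw [h]; ring
  have hq3 : Q.eval zi ≠ 0 := by intro h; apply hsimple; rw [h]; ring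
  rw [hB', hRd]
  simp only [derivative_mul, derivative_sub, derivative_X, derivative_C, eval_mul, eval_add,
    eval_sub, eval_X, eval_C, sub_zero, one_mul, zero_mul, mul_one, zero_sub, add_zero, zero_add]
  generalize Polynomial.eval zi Q = q at hq3 ⊢
  generalize Polynomial.eval zi R = r
  generalize Polynomial.eval zi B = bB
  generalize Polynomial.eval zi (Polynomial.derivative Q) = q'
  obtain ⟨uj, rfl⟩ : ∃ uj, ζj = zi - uj := ⟨zi - ζj, by ring⟩
  obtain ⟨uk, rfl⟩ : ∃ uk, ζk = zi - uk := ⟨zi - ζk, by ring⟩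
  simp only [sub_sub_cancel] at hq1 hq2 ⊢
  exact final_alg _ q r bB q' uj uk zi hq1 hq2 hq3
end

section
/- Let a ∈ ℝ, n ≥ 5, and ζ_j = a for j = 3,…,n−1, with P'(z) = ∏_{j=1}^{n−1}(z−ζ_j) and P(z) = ∫_β^z P'(w)dw having a simple root z_i ∉ {a, ζ₁, ζ₂}. Then for j, k ≥ 3, the difference of mixed second partials of the implicit root satisfies: ∂²z_i/∂ζ_j² − ∂²z_i/∂ζ₃∂ζ₄ = (1/P'(z_i)) ∫_β^{z_i} P'(w)/(w−a)² dw, and ∂²z_i/∂ζ_j∂ζ_k − ∂²z_i/∂ζ₃∂ζ₄ = 0 for j ≠ k. -/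
open Polynomial Function

lemma polyExt {p q : Polynomial ℂ} (β : ℂ) (h : derivative p = derivative q)
    (h2 : p.eval β = q.eval β) : p = q := by
  have h3 : derivative (p - q) = 0 := by rw [derivative_sub, h, sub_self]
  obtain ⟨c, hc⟩ : ∃ c, p - q = C c := ⟨_, eq_C_of_derivative_eq_zero h3⟩
  have : c = 0 := by
    have := congrArg (Polynomial.eval β) hc
    simp [h2] at this; simp [this]
  rw [this] at hc; simpa [sub_eq_zero] using hc

lemma existsAntideriv (q : Polynomial ℂ) (β : ℂ) :
    ∃ p : Polynomial ℂ, derivative p = q ∧ p.eval β = 0 := by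
  suffices h : ∃ p : Polynomial ℂ, derivative p = q by
    obtain ⟨p, hp⟩ := h
    exact ⟨p - C (p.eval β), by simp [hp], by simp⟩
  induction q using Polynomial.induction_on' with
  | add f g hf hg =>
    obtain ⟨p1, h1⟩ := hf; obtain ⟨p2, h2⟩ := hg
    exact ⟨p1 + p2, by simp [h1, h2]⟩
  | monomial m c =>
    refine ⟨C (c / (m + 1)) * X ^ (m + 1), ?_⟩
    rw [derivative_C_mul, derivative_X_pow]
    have h2 : (((m:ℂ)) + 1) ≠ 0 := Nat.cast_add_one_ne_zero m
    have h1 : (((m+1 : ℕ)) : ℂ) = (m : ℂ) + 1 := by push_cast; ring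
    rw [Nat.add_sub_cancel, ← mul_assoc, ← C_mul, h1, div_mul_cancel₀ _ h2,
      C_mul_X_pow_eq_monomial]

noncomputable def Mterm (f0 f1 f2 : Polynomial ℂ) (a zi d : ℂ) : ℂ :=
  ((((derivative f1).eval zi) * ((f1.eval zi - a * f0.eval zi) / d)
      - (f0.eval zi + a * (((derivative f0).eval zi) * ((f1.eval zi - a * f0.eval zi) / d)))) * d
    - (f1.eval zi - a * f0.eval zi) *
      (((derivative (derivative f2)).eval zi) * ((f1.eval zi - a * f0.eval zi) / d)
        - (((derivative f1).eval zi) + (a + a) * (((derivative (derivative f1)).eval zi) * ((f1.eval zi - a * f0.eval zi) / d)))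
        + (a * ((derivative f0).eval zi) + (a * a) * (((derivative (derivative f0)).eval zi) * ((f1.eval zi - a * f0.eval zi) / d))))) / d ^ 2

lemma implicit_second (f0 f1 f2 : Polynomial ℂ) (a zi d : ℂ)
    (g : ℂ → ℂ → ℂ)
    (hroot : ∀ᶠ st : ℂ × ℂ in nhds (a, a),
      f2.eval (g st.1 st.2) - (st.1 + st.2) * f1.eval (g st.1 st.2)
        + st.1 * st.2 * f0.eval (g st.1 st.2) = 0)
    (hd1 : ∀ᶠ st : ℂ × ℂ in nhds (a, a), DifferentiableAt ℂ (g st.1) st.2)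
    (hd2 : ∀ᶠ s in nhds a, DifferentiableAt ℂ (fun s' => g s' a) s)
    (hga : g a a = zi)
    (hdval : (derivative f2).eval zi - (a + a) * (derivative f1).eval zi
        + a * a * (derivative f0).eval zi = d)
    (hd0 : d ≠ 0) :
    deriv (fun s => deriv (g s) a) a = Mterm f0 f1 f2 a zi d ∧
    deriv (deriv (fun s' => g s' a)) a = Mterm f0 f1 f2 a zi d + f0.eval zi / d := by
  classical
  set w : ℂ → ℂ := fun s => g s a with hw_def
  have hwa : w a = zi := hga
  obtain ⟨O, hO, hOopen, hOmem⟩ := eventually_nhds_iff.mp (hroot.and hd1)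
  obtain ⟨V, hV, hVopen, haV⟩ := eventually_nhds_iff.mp hd2
  set U : Set ℂ := {s | (s, a) ∈ O} with hU_def
  have hUopen : IsOpen U := hOopen.preimage (by continuity)
  have haU : a ∈ U := hOmem
  set Φx : ℂ → ℂ := fun s => (derivative f2).eval (w s)
      - (s + a) * (derivative f1).eval (w s) + s * a * (derivative f0).eval (w s) with hΦx_def
  -- derivative of w at a
  have hwdiff : DifferentiableAt ℂ w a := hV a haV
  set p : ℂ := deriv w a with hp_def
  have hwA : HasDerivAt w p a := hwdiff.hasDerivAt
  -- key identity for the t-derivative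
  have hkey_v : ∀ s ∈ U, Φx s * deriv (g s) a
      = f1.eval (w s) - s * f0.eval (w s) := by
    intro s hs
    have hmem : (s, a) ∈ O := hs
    have hgd : DifferentiableAt ℂ (g s) a := (hO _ hmem).2
    have hOev : ∀ᶠ t in nhds a, (s, t) ∈ O := by
      have hc : ContinuousAt (fun t : ℂ => (s, t)) a :=
        (continuous_const.prodMk continuous_id).continuousAt
      exact hc.preimage_mem_nhds (hOopen.mem_nhds hmem)
    have hχ0 : (fun t => f2.eval (g s t) - (s + t) * f1.eval (g s t)
        + s * t * f0.eval (g s t)) =ᶠ[nhds a] (fun _ => (0 : ℂ)) := by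
      filter_upwards [hOev] with t ht
      exact (hO _ ht).1
    have hgda : HasDerivAt (g s) (deriv (g s) a) a := hgd.hasDerivAt
    have h1 : HasDerivAt (fun t => f2.eval (g s t))
        ((derivative f2).eval (g s a) * deriv (g s) a) a :=
      (f2.hasDerivAt (g s a)).comp a hgda
    have h2 : HasDerivAt (fun t => (s + t) * f1.eval (g s t))
        (1 * f1.eval (g s a) + (s + a) * ((derivative f1).eval (g s a) * deriv (g s) a)) a := by
      exact (((hasDerivAt_id a).const_add s).mul ((f1.hasDerivAt (g s a)).comp a hgda))
    have h3 : HasDerivAt (fun t => s * t * f0.eval (g s t))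
        ((s * 1) * f0.eval (g s a) + (s * a) * ((derivative f0).eval (g s a) * deriv (g s) a)) a := by
      exact (((hasDerivAt_id a).const_mul s).mul ((f0.hasDerivAt (g s a)).comp a hgda))
    have hχ := (h1.sub h2).add h3
    have hz : (derivative f2).eval (g s a) * deriv (g s) a
        - (1 * f1.eval (g s a) + (s + a) * ((derivative f1).eval (g s a) * deriv (g s) a))
        + ((s * 1) * f0.eval (g s a) + (s * a) * ((derivative f0).eval (g s a) * deriv (g s) a)) = 0 := by
      rw [← hχ.deriv]
      exact hχ0.deriv_eq.trans (by simp)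
    have hwsa : w s = g s a := rfl
    simp only [hΦx_def, hwsa]
    linear_combination hz
  -- key identity for the s-derivative of w
  have hkey_w : ∀ s ∈ U ∩ V, Φx s * deriv w s = f1.eval (w s) - a * f0.eval (w s) := by
    rintro s ⟨hsU, hsV⟩
    have hψ0 : (fun s' => f2.eval (w s') - (s' + a) * f1.eval (w s')
        + s' * a * f0.eval (w s')) =ᶠ[nhds s] (fun _ => (0 : ℂ)) := by
      have hUev : ∀ᶠ s' in nhds s, s' ∈ U := hUopen.mem_nhds hsU
      filter_upwards [hUev] with s' hs'
      exact (hO _ hs').1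
    have hwd : HasDerivAt w (deriv w s) s := (hV s hsV).hasDerivAt
    have h1 : HasDerivAt (fun s' => f2.eval (w s'))
        ((derivative f2).eval (w s) * deriv w s) s :=
      (f2.hasDerivAt (w s)).comp s hwd
    have h2 : HasDerivAt (fun s' => (s' + a) * f1.eval (w s'))
        (1 * f1.eval (w s) + (s + a) * ((derivative f1).eval (w s) * deriv w s)) s := by
      exact (((hasDerivAt_id s).add_const a).mul ((f1.hasDerivAt (w s)).comp s hwd))
    have h3 : HasDerivAt (fun s' => s' * a * f0.eval (w s'))
        ((1 * a) * f0.eval (w s) + (s * a) * ((derivative f0).eval (w s) * deriv w s)) s := by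
      exact (((hasDerivAt_id s).mul_const a).mul ((f0.hasDerivAt (w s)).comp s hwd))
    have hψ := (h1.sub h2).add h3
    have hz : (derivative f2).eval (w s) * deriv w s
        - (1 * f1.eval (w s) + (s + a) * ((derivative f1).eval (w s) * deriv w s))
        + ((1 * a) * f0.eval (w s) + (s * a) * ((derivative f0).eval (w s) * deriv w s)) = 0 := by
      rw [← hψ.deriv]
      exact hψ0.deriv_eq.trans (by simp)
    simp only [hΦx_def]
    linear_combination hz
  -- HasDerivAt for the building blocks at a
  have hc0 : HasDerivAt (fun s => f0.eval (w s)) ((derivative f0).eval zi * p) a := by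
    have := (f0.hasDerivAt (w a)).comp a hwA; rwa [hwa] at this
  have hc1 : HasDerivAt (fun s => f1.eval (w s)) ((derivative f1).eval zi * p) a := by
    have := (f1.hasDerivAt (w a)).comp a hwA; rwa [hwa] at this
  have hc0' : HasDerivAt (fun s => (derivative f0).eval (w s))
      ((derivative (derivative f0)).eval zi * p) a := by
    have := ((derivative f0).hasDerivAt (w a)).comp a hwA; rwa [hwa] at this
  have hc1' : HasDerivAt (fun s => (derivative f1).eval (w s))
      ((derivative (derivative f1)).eval zi * p) a := by
    have := ((derivative f1).hasDerivAt (w a)).comp a hwA; rwa [hwa] at this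
  have hc2' : HasDerivAt (fun s => (derivative f2).eval (w s))
      ((derivative (derivative f2)).eval zi * p) a := by
    have := ((derivative f2).hasDerivAt (w a)).comp a hwA; rwa [hwa] at this
  have hΦ : HasDerivAt Φx
      ((derivative (derivative f2)).eval zi * p
        - (1 * (derivative f1).eval (w a) + (a + a) * ((derivative (derivative f1)).eval zi * p))
        + ((1 * a) * (derivative f0).eval (w a) + (a * a) * ((derivative (derivative f0)).eval zi * p))) a := by
    exact (hc2'.sub (((hasDerivAt_id a).add_const a).mul hc1')).add
      (((hasDerivAt_id a).mul_const a).mul hc0')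
  have hΦxa : Φx a = d := by
    simp only [hΦx_def, hwa]; exact hdval
  have hΦane : Φx a ≠ 0 := by rw [hΦxa]; exact hd0
  have hΦne : ∀ᶠ s in nhds a, Φx s ≠ 0 := hΦ.continuousAt.eventually_ne hΦane
  have hUVev : ∀ᶠ s in nhds a, s ∈ U ∩ V := (hUopen.inter hVopen).mem_nhds ⟨haU, haV⟩
  -- p value
  have hp : p = (f1.eval zi - a * f0.eval zi) / d := by
    have := hkey_w a ⟨haU, haV⟩
    rw [hΦxa, hwa, ← hp_def] at this
    field_simp
    linear_combination this
  -- eventual formulas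
  have hveq : (fun s => deriv (g s) a) =ᶠ[nhds a]
      fun s => (f1.eval (w s) - s * f0.eval (w s)) / Φx s := by
    filter_upwards [hUVev, hΦne] with s hs hne
    rw [eq_div_iff hne, mul_comm]
    exact hkey_v s hs.1
  have hweq : deriv w =ᶠ[nhds a]
      fun s => (f1.eval (w s) - a * f0.eval (w s)) / Φx s := by
    filter_upwards [hUVev, hΦne] with s hs hne
    rw [eq_div_iff hne, mul_comm]
    exact hkey_w s hs
  -- numerators
  have hN : HasDerivAt (fun s => f1.eval (w s) - s * f0.eval (w s))
      ((derivative f1).eval zi * p - (1 * f0.eval (w a) + a * ((derivative f0).eval zi * p))) a :=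
    hc1.sub ((hasDerivAt_id a).mul hc0)
  have hNa : HasDerivAt (fun s => f1.eval (w s) - a * f0.eval (w s))
      ((derivative f1).eval zi * p - a * ((derivative f0).eval zi * p)) a :=
    hc1.sub (hc0.const_mul a)
  have hdiv1 : HasDerivAt (fun s => (f1.eval (w s) - s * f0.eval (w s)) / Φx s) _ a :=
    hN.div hΦ hΦane
  have hdiv2 : HasDerivAt (fun s => (f1.eval (w s) - a * f0.eval (w s)) / Φx s) _ a :=
    hNa.div hΦ hΦane
  constructor
  · rw [hveq.deriv_eq, hdiv1.deriv, hwa, hΦxa, Mterm, ← hp]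
    field_simp
  · rw [hweq.deriv_eq, hdiv2.deriv, hwa, hΦxa, Mterm, ← hp]
    field_simp
    ring

lemma updateDiff {m : ℕ} (u : Fin m → ℂ) (k : Fin m) (t₀ : ℂ) :
    DifferentiableAt ℂ (fun t => Function.update u k t) t₀ := by
  apply differentiableAt_pi.mpr
  intro l
  by_cases h : l = k
  · subst h; simp only [Function.update_self]; exact differentiableAt_id
  · simp only [Function.update_of_ne h]; exact differentiableAt_const _

/-- Let `n ≥ 5`, `ζ₀ : Fin (n-1) → ℂ` with `ζ₀ j = a` for all `j ≥ 3`
(0-indexed: `(j:ℕ) ≥ 2`), `P ζ` the antiderivative of `∏ (z - ζ j)`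
vanishing at `β`, and `z` the analytic implicit root function of the tuple
`ζ` near `ζ₀`, with value the simple root `z_i ∉ {a, ζ₁, ζ₂}`. Then for
`j, k ≥ 3` the pure second partial minus the reference mixed partial
`∂²z_i/∂ζ₃∂ζ₄` equals `(1/P'(z_i)) ∫_β^{z_i} P'(w)/(w-a)² dw` (which is
`R(z_i)/P'(z_i)` where `R' = P'/(X-a)²`, `R(β)=0`), and for `j ≠ k` the
mixed partials agree. -/
theorem stmt16 (n : ℕ) (hn : 5 ≤ n) (a β zi : ℂ)
    (ζ₀ : Fin (n - 1) → ℂ) (hζ : ∀ j : Fin (n - 1), 2 ≤ (j : ℕ) → ζ₀ j = a)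
    (P : (Fin (n - 1) → ℂ) → Polynomial ℂ)
    (hPd : ∀ ζ : Fin (n - 1) → ℂ, Polynomial.derivative (P ζ) =
      ∏ j, (Polynomial.X - Polynomial.C (ζ j)))
    (hPβ : ∀ ζ : Fin (n - 1) → ℂ, (P ζ).eval β = 0)
    (z : (Fin (n - 1) → ℂ) → ℂ)
    (hz : AnalyticAt ℂ z ζ₀) (hz0 : z ζ₀ = zi)
    (hroot : ∀ᶠ ζ in nhds ζ₀, (P ζ).eval (z ζ) = 0)
    (hsimple : (Polynomial.derivative (P ζ₀)).eval zi ≠ 0)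
    (hne1 : zi ≠ a)
    (hne2 : zi ≠ ζ₀ ⟨0, by omega⟩) (hne3 : zi ≠ ζ₀ ⟨1, by omega⟩)
    (R : Polynomial ℂ)
    (hRd : (Polynomial.X - Polynomial.C a) ^ 2 * Polynomial.derivative R =
      Polynomial.derivative (P ζ₀))
    (hRβ : R.eval β = 0)
    (mixed : Fin (n - 1) → Fin (n - 1) → ℂ)
    (hmixed : ∀ j k, mixed j k =
      deriv (fun s => deriv (fun t => z (update (update ζ₀ j s) k t)) (ζ₀ k)) (ζ₀ j))
    (pure2 : Fin (n - 1) → ℂ)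
    (hpure2 : ∀ j, pure2 j = deriv (deriv (fun t => z (update ζ₀ j t))) (ζ₀ j)) :
    (∀ j : Fin (n - 1), 2 ≤ (j : ℕ) →
      pure2 j - mixed ⟨2, by omega⟩ ⟨3, by omega⟩ =
        R.eval zi / (Polynomial.derivative (P ζ₀)).eval zi) ∧
    (∀ j k : Fin (n - 1), 2 ≤ (j : ℕ) → 2 ≤ (k : ℕ) → j ≠ k →
      mixed j k - mixed ⟨2, by omega⟩ ⟨3, by omega⟩ = 0) := by
  classical
  have hXa : (X - C a : Polynomial ℂ) ≠ 0 := X_sub_C_ne_zero a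
  set d : ℂ := (Polynomial.derivative (P ζ₀)).eval zi with hd_def
  -- Step 1: the erased product equals derivative R, for every admissible pair
  have hB : ∀ j k : Fin (n - 1), 2 ≤ (j : ℕ) → 2 ≤ (k : ℕ) → j ≠ k →
      ∏ l ∈ (Finset.univ.erase k).erase j, (X - C (ζ₀ l)) = derivative R := by
    intro j k hj hk hjk
    have hins : (X - C a) * ((X - C a) *
        ∏ l ∈ (Finset.univ.erase k).erase j, (X - C (ζ₀ l))) = Polynomial.derivative (P ζ₀) := by
      rw [hPd, ← Finset.mul_prod_erase Finset.univ _ (Finset.mem_univ k),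
        ← Finset.mul_prod_erase _ _ (Finset.mem_erase.mpr ⟨hjk, Finset.mem_univ j⟩),
        hζ j hj, hζ k hk]
    apply mul_left_cancel₀ hXa
    apply mul_left_cancel₀ hXa
    rw [hins, ← hRd]
    ring
  -- Step 2: product formula for updated tuples
  have hprod : ∀ (j k : Fin (n - 1)), j ≠ k → ∀ s t : ℂ,
      ∏ l, (X - C (update (update ζ₀ j s) k t l)) =
      (X - C s) * ((X - C t) * ∏ l ∈ (Finset.univ.erase k).erase j, (X - C (ζ₀ l))) := by
    intro j k hjk s t
    have e1 : (fun l => X - C (update (update ζ₀ j s) k t l)) =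
        Function.update (fun l => X - C ((update ζ₀ j s) l)) k (X - C t) := by
      funext l; by_cases h : l = k <;> simp [Function.update_apply, h]
    rw [e1, Finset.prod_update_of_mem (Finset.mem_univ k), ← Finset.erase_eq]
    have e2 : (fun l => X - C ((update ζ₀ j s) l)) =
        Function.update (fun l => X - C (ζ₀ l)) j (X - C s) := by
      funext l; by_cases h : l = j <;> simp [Function.update_apply, h]
    rw [e2, Finset.prod_update_of_mem (Finset.mem_erase.mpr ⟨hjk, Finset.mem_univ j⟩),
      ← Finset.erase_eq]
    ring
  -- Step 3: antiderivatives
  obtain ⟨f1, hf1d, hf1β⟩ := existsAntideriv (X * derivative R) β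
  obtain ⟨f2, hf2d, hf2β⟩ := existsAntideriv (X ^ 2 * derivative R) β
  -- Step 4: key polynomial identity
  have hPkey : ∀ (j k : Fin (n - 1)), 2 ≤ (j : ℕ) → 2 ≤ (k : ℕ) → j ≠ k → ∀ s t : ℂ,
      P (update (update ζ₀ j s) k t) = f2 - C (s + t) * f1 + C (s * t) * R := by
    intro j k hj hk hjk s t
    apply polyExt β
    · rw [hPd, hprod j k hjk s t, hB j k hj hk hjk]
      rw [derivative_add, derivative_sub, derivative_mul, derivative_mul,
        derivative_C, derivative_C, hf1d, hf2d]
      simp only [C_add, C_mul, zero_mul, zero_add, add_zero]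
      ring
    · simp [hPβ, hf1β, hf2β, hRβ]
  -- d-value identity
  have hdval : (derivative f2).eval zi - (a + a) * (derivative f1).eval zi
      + a * a * (derivative R).eval zi = d := by
    rw [hf1d, hf2d, hd_def, ← hRd]
    simp only [eval_mul, eval_pow, eval_X, eval_sub, eval_C]
    ring
  -- master lemma
  have master : ∀ (j k : Fin (n - 1)), 2 ≤ (j : ℕ) → 2 ≤ (k : ℕ) → j ≠ k →
      mixed j k = Mterm R f1 f2 a zi d ∧
      pure2 j = Mterm R f1 f2 a zi d + R.eval zi / d := by
    intro j k hj hk hjk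
    have haj : ζ₀ j = a := hζ j hj
    have hak : ζ₀ k = a := hζ k hk
    set g : ℂ → ℂ → ℂ := fun s t => z (update (update ζ₀ j s) k t) with hg_def
    have hFcont : Continuous (fun st : ℂ × ℂ => update (update ζ₀ j st.1) k st.2) := by
      apply continuous_pi
      intro l
      by_cases h1 : l = k
      · subst h1; simp only [Function.update_self]; exact continuous_snd
      · by_cases h2 : l = j
        · subst h2; simp only [Function.update_of_ne h1, Function.update_self]
          exact continuous_fst
        · simp only [Function.update_of_ne h1, Function.update_of_ne h2]; exact continuous_const
    have hja : update ζ₀ j a = ζ₀ := by rw [← haj, Function.update_eq_self]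
    have hFaa : update (update ζ₀ j a) k a = ζ₀ := by
      rw [hja, ← hak, Function.update_eq_self]
    have hFtend : Filter.Tendsto (fun st : ℂ × ℂ => update (update ζ₀ j st.1) k st.2)
        (nhds (a, a)) (nhds ζ₀) := by
      simpa [hFaa] using hFcont.tendsto (a, a)
    -- hypotheses of implicit_second
    have hroot' : ∀ᶠ st : ℂ × ℂ in nhds (a, a),
        f2.eval (g st.1 st.2) - (st.1 + st.2) * f1.eval (g st.1 st.2)
          + st.1 * st.2 * R.eval (g st.1 st.2) = 0 := by
      filter_upwards [hFtend.eventually hroot] with st hst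
      rw [hPkey j k hj hk hjk st.1 st.2] at hst
      simpa [eval_add, eval_sub, eval_mul, eval_C] using hst
    have hzana : ∀ᶠ st : ℂ × ℂ in nhds (a, a),
        AnalyticAt ℂ z (update (update ζ₀ j st.1) k st.2) :=
      hFtend.eventually hz.eventually_analyticAt
    have hd1 : ∀ᶠ st : ℂ × ℂ in nhds (a, a), DifferentiableAt ℂ (g st.1) st.2 := by
      filter_upwards [hzana] with st hst
      exact (hst.differentiableAt).comp st.2 (updateDiff (update ζ₀ j st.1) k st.2)
    have hsa : ∀ s : ℂ, update (update ζ₀ j s) k a = update ζ₀ j s := by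
      intro s
      have h : (update ζ₀ j s) k = a := by rw [Function.update_of_ne (Ne.symm hjk), hak]
      rw [← h, Function.update_eq_self]
    have hgw : (fun s' => g s' a) = fun t => z (update ζ₀ j t) := by
      funext s'; simp only [hg_def, hsa]
    have hd2 : ∀ᶠ s in nhds a, DifferentiableAt ℂ (fun s' => g s' a) s := by
      have hjtend : Filter.Tendsto (fun s : ℂ => update ζ₀ j s) (nhds a) (nhds ζ₀) := by
        have hc : Continuous (fun s : ℂ => update ζ₀ j s) := by
          apply continuous_pi
          intro l
          by_cases h2 : l = j
          · subst h2; simp only [Function.update_self]; exact continuous_id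
          · simp only [Function.update_of_ne h2]; exact continuous_const
        simpa [hja] using hc.tendsto a
      filter_upwards [hjtend.eventually hz.eventually_analyticAt] with s hs
      rw [hgw]
      exact (hs.differentiableAt).comp s (updateDiff ζ₀ j s)
    have hga : g a a = zi := by rw [hg_def]; simp only [hFaa]; exact hz0
    obtain ⟨hm, hp⟩ := implicit_second R f1 f2 a zi d g hroot' hd1 hd2 hga hdval hsimple
    constructor
    · rw [hmixed j k, haj, hak]
      exact hm
    · rw [hpure2 j, haj, ← hgw]
      exact hp
  -- finish
  have h23 : (⟨2, by omega⟩ : Fin (n - 1)) ≠ ⟨3, by omega⟩ := by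
    intro h; exact absurd (congrArg Fin.val h) (by norm_num)
  have hM23 := (master ⟨2, by omega⟩ ⟨3, by omega⟩ (by norm_num) (by norm_num) h23).1
  constructor
  · intro j hj
    obtain ⟨k, hk, hjk⟩ : ∃ k : Fin (n - 1), 2 ≤ (k : ℕ) ∧ j ≠ k := by
      by_cases h : (j : ℕ) = 2
      · exact ⟨⟨3, by omega⟩, by norm_num, fun he => by
          have := congrArg Fin.val he; simp [h] at this⟩
      · exact ⟨⟨2, by omega⟩, by norm_num, fun he => by
          have := congrArg Fin.val he; simp at this; omega⟩
    rw [(master j k hj hk hjk).2, hM23]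
    ring
  · intro j k hj hk hjk
    rw [(master j k hj hk hjk).1, hM23]
    ring
end

section
/- Let n = 8, β = 0.7290857513, and P(z) = ∫_β^z (w + 0.2035409790)⁵ (w² − 0.5410836525·w + 0.7327229666) dw. Then the quadratic factor w² − 0.5410836525·w + 0.7327229666 has two non-real complex conjugate roots ρ, ρ̄, and the three distinct critical points −0.2035409790, ρ, ρ̄ of P are all at the same distance from β, and this common distance r satisfies 0.9 < r < 0.97. -/
/-- For the degree-8 example of the paper with `β = 0.7290857513` and
`P'(z) = (z + 0.2035409790)⁵ (z² - 0.5410836525 z + 0.7327229666)`, the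
quadratic factor has two non-real conjugate roots `ρ, ρ̄`, the three
distinct critical points `-0.2035409790, ρ, ρ̄` are all at the same
distance (to within `10⁻⁶`) from `β`, and this common distance `r`
satisfies `0.9 < r < 0.97`. -/
theorem stmt18 (β : ℝ) (hβ : β = 0.7290857513) :
    ∃ (ρ : ℂ) (r : ℝ), ρ.im ≠ 0 ∧
      ρ ^ 2 - (0.5410836525 : ℂ) * ρ + (0.7327229666 : ℂ) = 0 ∧
      ((starRingEnd ℂ) ρ) ^ 2 - (0.5410836525 : ℂ) * ((starRingEnd ℂ) ρ) +
        (0.7327229666 : ℂ) = 0 ∧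
      ρ ≠ (starRingEnd ℂ) ρ ∧ ρ ≠ (-0.2035409790 : ℂ) ∧
      (starRingEnd ℂ) ρ ≠ (-0.2035409790 : ℂ) ∧
      |‖ρ - (β : ℂ)‖ - r| ≤ 1e-6 ∧
      |‖(starRingEnd ℂ) ρ - (β : ℂ)‖ - r| ≤ 1e-6 ∧
      |‖(-0.2035409790 : ℂ) - (β : ℂ)‖ - r| ≤ 1e-6 ∧
      0.9 < r ∧ r < 0.97 := by
  subst hβ
  set a : ℝ := 0.5410836525 / 2 with ha
  set t : ℝ := 0.7327229666 - a ^ 2 with ht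
  have htpos : (0 : ℝ) < t := by norm_num [ht, ha]
  set b : ℝ := Real.sqrt t with hb
  have hbpos : 0 < b := Real.sqrt_pos.mpr htpos
  have hb2 : b ^ 2 = t := Real.sq_sqrt htpos.le
  have hb2c : ((b : ℂ)) ^ 2 = (t : ℂ) := by exact_mod_cast hb2
  set ρ : ℂ := (a : ℂ) + (b : ℂ) * Complex.I with hρ
  have him : ρ.im = b := by simp [hρ]
  have hre : ρ.re = a := by simp [hρ]
  have hconj : (starRingEnd ℂ) ρ = (a : ℂ) - (b : ℂ) * Complex.I := by
    simp [hρ, Complex.conj_ofReal, map_add, map_mul, Complex.conj_I]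
    ring
  have hc : (0.5410836525 : ℂ) = 2 * (a : ℂ) := by push_cast [ha]; norm_num
  have hd : (0.7327229666 : ℂ) = (a : ℂ) ^ 2 + (t : ℂ) := by push_cast [ht, ha]; norm_num
  refine ⟨ρ, 0.9326267303, by rw [him]; exact hbpos.ne', ?_, ?_, ?_, ?_, ?_, ?_, ?_, ?_,
    by norm_num, by norm_num⟩
  · rw [hρ, hc, hd]
    linear_combination ((b : ℂ)) ^ 2 * Complex.I_sq - hb2c
  · rw [hconj, hc, hd]
    linear_combination ((b : ℂ)) ^ 2 * Complex.I_sq - hb2c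
  · intro h
    have h2 := congrArg Complex.im h
    rw [him] at h2
    rw [hconj] at h2
    simp at h2
    linarith
  · intro h
    have h2 := congrArg Complex.im h
    rw [him] at h2
    norm_num at h2
    linarith
  · intro h
    have h2 := congrArg Complex.im h
    rw [hconj] at h2
    simp at h2
    norm_num at h2
    linarith
  · -- |ρ - β|
    have habs : ‖ρ - ((0.7290857513 : ℝ) : ℂ)‖ =
        Real.sqrt ((a - 0.7290857513) ^ 2 + t) := by
      rw [Complex.norm_def, Complex.normSq_apply]
      congr 1
      simp [hρ, Complex.sub_re, Complex.sub_im, Complex.ofReal_re, Complex.ofReal_im]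
      rw [← hb2]; ring
    rw [habs, abs_le]
    constructor
    · have h1 : Real.sqrt ((0.9326267303 - 1e-6 : ℝ) ^ 2) ≤
          Real.sqrt ((a - 0.7290857513) ^ 2 + t) :=
        Real.sqrt_le_sqrt (by norm_num [ha, ht])
      rw [Real.sqrt_sq (by norm_num)] at h1
      linarith
    · have h2 : Real.sqrt ((a - 0.7290857513) ^ 2 + t) ≤
          Real.sqrt ((0.9326267303 + 1e-6 : ℝ) ^ 2) :=
        Real.sqrt_le_sqrt (by norm_num [ha, ht])
      rw [Real.sqrt_sq (by norm_num)] at h2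
      linarith
  · -- |conj ρ - β|
    have habs : ‖(starRingEnd ℂ) ρ - ((0.7290857513 : ℝ) : ℂ)‖ =
        Real.sqrt ((a - 0.7290857513) ^ 2 + t) := by
      rw [hconj, Complex.norm_def, Complex.normSq_apply]
      congr 1
      simp [Complex.sub_re, Complex.sub_im, Complex.ofReal_re, Complex.ofReal_im]
      rw [← hb2]; ring
    rw [habs, abs_le]
    constructor
    · have h1 : Real.sqrt ((0.9326267303 - 1e-6 : ℝ) ^ 2) ≤
          Real.sqrt ((a - 0.7290857513) ^ 2 + t) :=
        Real.sqrt_le_sqrt (by norm_num [ha, ht])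
      rw [Real.sqrt_sq (by norm_num)] at h1
      linarith
    · have h2 : Real.sqrt ((a - 0.7290857513) ^ 2 + t) ≤
          Real.sqrt ((0.9326267303 + 1e-6 : ℝ) ^ 2) :=
        Real.sqrt_le_sqrt (by norm_num [ha, ht])
      rw [Real.sqrt_sq (by norm_num)] at h2
      linarith
  · -- |(-0.2035409790) - β|
    have key : ((-0.2035409790 : ℂ)) - ((0.7290857513 : ℝ) : ℂ) = ((-0.9326267303 : ℝ) : ℂ) := by
      push_cast; norm_num
    rw [key, Complex.norm_real, Real.norm_eq_abs]
    rw [show |(-0.9326267303 : ℝ)| = 0.9326267303 by rw [abs_of_nonpos (by norm_num)]; norm_num]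
    norm_num
end
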